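/- Let α, β, τ_α be real numbers with α < −1, 0 ≤ τ_α ≤ −1/(2α), and |β| < −α − 1, and let μ_β be a Borel probability measure on ℝ supported on [0,∞). Then for every complex λ with Re λ ≥ 0, λ + 1 − α·e^{−λτ_α} − β∫₀^∞ e^{−λt} dμ_β(t) ≠ 0; that is, the characteristic function of the equation with one discrete delay τ_α and one arbitrarily distributed delay has no root in the closed right half-plane (so the trivial solution is asymptotically stable). -/

import Mathlib

set_option maxHeartbeats 1000000

open MeasureTheory

theorem char_eq_discrete_plus_distributed_no_root_in_closed_right_half_plane
    (α β τα : ℝ) (hα : α < -1) (hτα₀ : 0 ≤ τα) (hτα : τα ≤ -1 / (2 * α))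
    (hβ : |β| < -α - 1)
    (μβ : Measure ℝ) [IsProbabilityMeasure μβ] (hμβ : μβ (Set.Iio 0) = 0) :
    ∀ lam : ℂ, 0 ≤ lam.re →
      lam + 1 - (α : ℂ) * Complex.exp (-lam * (τα : ℂ))
        - (β : ℂ) * ∫ t, Complex.exp (-lam * (t : ℂ)) ∂μβ ≠ 0 := by
  intro lam hre h0
  set x := lam.re with hxdef
  set y := lam.im with hydef
  set a : ℝ := -α with hadef
  have ha1 : 1 < a := by simp only [hadef]; linarith
  have ha0 : 0 < a := by linarith
  have hα0 : α ≠ 0 := by intro h; rw [h] at hα; norm_num at hα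
  have hβa : |β| < a - 1 := by rw [hadef]; linarith
  -- τ bound : a * τ ≤ 1/2
  have haτ : a * τα ≤ 1 / 2 := by
    have h1 : a * τα ≤ a * (-1 / (2 * α)) := mul_le_mul_of_nonneg_left hτα (le_of_lt ha0)
    have h2 : a * (-1 / (2 * α)) = 1 / 2 := by
      rw [hadef]; field_simp; try ring
    linarith
  -- integral bound
  have hI : ‖∫ t, Complex.exp (-lam * (t : ℂ)) ∂μβ‖ ≤ 1 := by
    have hae : ∀ᵐ (t : ℝ) ∂μβ, ‖Complex.exp (-lam * (t : ℂ))‖ ≤ 1 := by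
      rw [ae_iff]
      refine measure_mono_null ?_ hμβ
      intro t ht
      simp only [Set.mem_setOf_eq, not_le] at ht
      simp only [Set.mem_Iio]
      by_contra hcon
      push_neg at hcon
      have hnorm : ‖Complex.exp (-lam * (t : ℂ))‖ = Real.exp ((-lam * (t : ℂ)).re) := by
        rw [Complex.norm_exp]
      have hrele : (-lam * (t : ℂ)).re = -(x * t) := by
        simp [Complex.mul_re, hxdef]
      rw [hnorm, hrele] at ht
      have : Real.exp (-(x * t)) ≤ 1 := by
        rw [Real.exp_le_one_iff]
        have : 0 ≤ x * t := mul_nonneg hre hcon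
        linarith
      linarith
    calc ‖∫ t, Complex.exp (-lam * (t : ℂ)) ∂μβ‖
        ≤ 1 * (μβ Set.univ).toReal := norm_integral_le_of_norm_le_const hae
      _ = 1 := by simp
  -- from h0, the discrete part equals β * integral
  set X : ℂ := lam + 1 - (α : ℂ) * Complex.exp (-lam * (τα : ℂ)) with hXdef
  have hX : X = (β : ℂ) * ∫ t, Complex.exp (-lam * (t : ℂ)) ∂μβ := sub_eq_zero.mp h0
  have hXnorm : ‖X‖ ≤ |β| := by
    rw [hX]
    calc ‖(β : ℂ) * ∫ t, Complex.exp (-lam * (t : ℂ)) ∂μβ‖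
        = |β| * ‖∫ t, Complex.exp (-lam * (t : ℂ)) ∂μβ‖ := by
          rw [norm_mul, Complex.norm_real, Real.norm_eq_abs]
      _ ≤ |β| * 1 := mul_le_mul_of_nonneg_left hI (abs_nonneg β)
      _ = |β| := mul_one _
  have hXnorm2 : ‖X‖ ^ 2 = X.re ^ 2 + X.im ^ 2 := by
    rw [Complex.sq_norm, Complex.normSq_apply]; ring
  -- compute real and imaginary parts of X
  set E : ℝ := Real.exp (-(x * τα)) with hEdef
  set c : ℝ := Real.cos (y * τα) with hcdef
  set s : ℝ := Real.sin (y * τα) with hsdef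
  have hexpre : (-lam * (τα : ℂ)).re = -(x * τα) := by
    simp [Complex.mul_re, hxdef]
  have hexpim : (-lam * (τα : ℂ)).im = -(y * τα) := by
    simp [Complex.mul_im, hydef]
  have hXre : X.re = x + 1 + a * (E * c) := by
    simp only [hXdef, Complex.sub_re, Complex.add_re, Complex.one_re, Complex.mul_re,
      Complex.ofReal_re, Complex.ofReal_im, Complex.exp_re, Complex.exp_im, hexpre, hexpim]
    rw [Real.cos_neg]
    simp only [hEdef, hcdef, hadef, hxdef]
    try ring
  have hXim : X.im = y - a * (E * s) := by
    simp only [hXdef, Complex.sub_im, Complex.add_im, Complex.one_im, Complex.mul_im,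
      Complex.ofReal_re, Complex.ofReal_im, Complex.exp_re, Complex.exp_im, hexpre, hexpim]
    rw [Real.sin_neg]
    simp only [hEdef, hsdef, hadef, hydef]
    try ring
  -- basic facts
  have hE0 : 0 < E := Real.exp_pos _
  have hE1 : E ≤ 1 := by
    rw [hEdef, Real.exp_le_one_iff]
    have : 0 ≤ x * τα := mul_nonneg hre hτα₀
    linarith
  have hElb : 1 - x * τα ≤ E := by
    have := Real.add_one_le_exp (-(x * τα))
    linarith
  have hs2 : s ^ 2 ≤ 1 := by rw [hsdef]; exact Real.sin_sq_le_one _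
  have hst : |s| ≤ |y * τα| := Real.abs_sin_le_abs
  have hc1 : c ≤ 1 := Real.cos_le_one _
  have hclb : 1 - (y * τα) ^ 2 / 2 ≤ c := Real.one_sub_sq_div_two_le_cos
  clear_value X E c s
  clear_value x y a
  clear hX h0 hI hXdef hEdef hcdef hsdef hexpre hexpim
  -- key bound : (a-1)^2 ≤ X.re^2 + X.im^2
  have hkey : (a - 1) ^ 2 ≤ X.re ^ 2 + X.im ^ 2 := by
    have h4a : 4 * a ^ 2 * τα ^ 2 ≤ 1 := by
      nlinarith [mul_nonneg (mul_nonneg (le_of_lt ha0) hτα₀)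
        (by linarith : (0:ℝ) ≤ 1 / 2 - a * τα)]
    rcases le_or_gt (2 * a) |y| with hyc | hyc
    · -- large |y| : imaginary part suffices
      have hy2 : 4 * a ^ 2 ≤ y ^ 2 := by
        nlinarith [sq_abs y, abs_nonneg y]
      have hE2 : E ^ 2 ≤ 1 := by nlinarith [hE0, hE1]
      have hEs : (E * s) ^ 2 ≤ 1 := by nlinarith [hE2, hs2, sq_nonneg E, sq_nonneg s]
      have hw2 : (a * (E * s)) ^ 2 ≤ a ^ 2 := by
        nlinarith [hEs, sq_nonneg (E * s), sq_nonneg a]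
      have him : a ^ 2 ≤ X.im ^ 2 := by
        rw [hXim]
        linarith [hy2, hw2, sq_nonneg (y - 2 * (a * (E * s)))]
      linarith [sq_nonneg X.re, him, ha1]
    · -- small |y|
      have hy2 : y ^ 2 ≤ 4 * a ^ 2 := by
        nlinarith [sq_abs y, abs_nonneg y]
      have htsq1 : (y * τα) ^ 2 ≤ 1 := by
        nlinarith [mul_nonneg (sq_nonneg τα) (by linarith : (0:ℝ) ≤ 4 * a ^ 2 - y ^ 2)]
      have hc0 : (0:ℝ) ≤ c := by linarith
      -- real part lower bound : 8a + 8a² - y² ≤ 8a * X.re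
      have haE : a - x / 2 ≤ a * E := by
        have h1 := mul_le_mul_of_nonneg_left hElb (le_of_lt ha0)
        have h2 := mul_le_mul_of_nonneg_left haτ hre
        nlinarith [h1, h2]
      have hre1 : 1 + a * c ≤ X.re := by
        rw [hXre]
        have h1 : (a - x / 2) * c ≤ a * (E * c) := by
          nlinarith [mul_nonneg (sub_nonneg.mpr haE) hc0]
        linarith [h1, mul_nonneg hre (by linarith : (0:ℝ) ≤ 1 - c / 2)]
      have hac : 8 * a ^ 2 * (1 - c) ≤ y ^ 2 := by
        have t2 : 4 * a ^ 2 * (y * τα) ^ 2 ≤ y ^ 2 := by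
          nlinarith [mul_nonneg (sq_nonneg y) (by linarith : (0:ℝ) ≤ 1 - 4 * a ^ 2 * τα ^ 2)]
        have h8 := mul_le_mul_of_nonneg_left hclb (by positivity : (0:ℝ) ≤ 8 * a ^ 2)
        linarith [t2, h8]
      have P : 8 * a + 8 * a ^ 2 - y ^ 2 ≤ 8 * a * X.re := by
        have h9 := mul_le_mul_of_nonneg_left hre1 (by positivity : (0:ℝ) ≤ 8 * a)
        linarith [hac, h9]
      have hL0 : (0:ℝ) < 8 * a + 8 * a ^ 2 - y ^ 2 := by
        linarith [hy2, mul_pos ha0 ha0]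
      have hsq : (8 * a + 8 * a ^ 2 - y ^ 2) ^ 2 ≤ 64 * a ^ 2 * X.re ^ 2 := by
        linarith [mul_self_le_mul_self (le_of_lt hL0) P]
      -- imaginary part lower bound : y² / 4 ≤ X.im²
      have hws : |a * (E * s)| ≤ |y| / 2 := by
        have h1 : |a * (E * s)| = a * E * |s| := by
          rw [abs_mul, abs_mul, abs_of_pos ha0, abs_of_pos hE0]; ring
        rw [h1]
        have h2 : a * E * |s| ≤ a * E * (|y| * τα) := by
          apply mul_le_mul_of_nonneg_left _ (by positivity)
          calc |s| ≤ |y * τα| := hst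
            _ = |y| * τα := by rw [abs_mul, abs_of_nonneg hτα₀]
        have h3 : a * E * (|y| * τα) ≤ |y| / 2 := by
          have hE1' : a * τα * E ≤ 1 / 2 * 1 :=
            mul_le_mul haτ hE1 (le_of_lt hE0) (by norm_num)
          nlinarith [abs_nonneg y]
        linarith
      have him : y ^ 2 / 4 ≤ X.im ^ 2 := by
        rw [hXim]
        have h2 : y * (a * (E * s)) ≤ |y| * |a * (E * s)| :=
          le_trans (le_abs_self _) (le_of_eq (abs_mul _ _))
        linarith [h2, sq_abs y, sq_abs (a * (E * s)), abs_nonneg y, abs_nonneg (a * (E * s)),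
          mul_nonneg (by linarith [abs_nonneg (a * (E * s))] : (0:ℝ) ≤ |y| / 2 - |a * (E * s)|)
            (by linarith [abs_nonneg (a * (E * s)), abs_nonneg y] :
              (0:ℝ) ≤ 3 * |y| / 2 - |a * (E * s)|)]
      have him64 : 16 * a ^ 2 * y ^ 2 ≤ 64 * a ^ 2 * X.im ^ 2 := by
        have := mul_le_mul_of_nonneg_left him (by positivity : (0:ℝ) ≤ 64 * a ^ 2)
        linarith
      -- combine
      have key64 : 64 * a ^ 2 * (a - 1) ^ 2 ≤ 64 * a ^ 2 * (X.re ^ 2 + X.im ^ 2) := by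
        linarith [hsq, him64, sq_nonneg (y ^ 2 - 8 * a),
          mul_nonneg (sq_nonneg a) (by linarith : (0:ℝ) ≤ 4 * a - 1)]
      exact le_of_mul_le_mul_left key64 (by positivity)
  -- conclude contradiction
  have h1 : ‖X‖ ^ 2 ≤ |β| ^ 2 := by
    nlinarith [hXnorm, norm_nonneg X, abs_nonneg β]
  nlinarith [hkey, hXnorm2, h1, hβa, abs_nonneg β]
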